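/- Let μ be a partition of n with distinct parts, let t be a μ-tableau, and let π ∈ S_n be an m-involution (m ≥ 1) such that ⟨π·e_t, e_t⟩ is odd. Then m ≤ (n − ℓ_o(μ))/2, and for every column index c the permutation π fixes at most one element of the column set {t(r,c) : 1 ≤ r ≤ ℓ with c ≤ μ_r}. -/

import Mathlib

noncomputable section
open scoped Classical

/-- The cells of the Young diagram of a partition `μ` (given as a list of parts):
pairs of a row index `r` and a column index `c < μ_r`. -/
abbrev YoungCell (μ : List ℕ) := (r : Fin μ.length) × Fin (μ.get r)

/-- A `μ`-tableau: a bijective filling of the Young diagram of `μ` with the symbols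
`1, …, n` (here: the elements of `Fin n`). -/
abbrev YoungTableau (n : ℕ) (μ : List ℕ) := YoungCell μ ≃ Fin n

/-- A family of rows is a `μ`-tabloid: row `r` has `μ_r` elements, the rows are pairwise
disjoint and cover `{1, …, n}`. -/
def IsTabloid (n : ℕ) (μ : List ℕ) (R : Fin μ.length → Finset (Fin n)) : Prop :=
  (∀ r, (R r).card = μ.get r) ∧
  (∀ r s, r ≠ s → Disjoint (R r) (R s)) ∧
  (∀ i, ∃ r, i ∈ R r)

/-- A `μ`-tabloid: an ordered partition of `{1, …, n}` with block sizes `μ₁, …, μ_ℓ`. -/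
def Tabloid (n : ℕ) (μ : List ℕ) := {R : Fin μ.length → Finset (Fin n) // IsTabloid n μ R}

variable {n : ℕ} {μ : List ℕ}

/-- The action of a permutation on a tabloid, applying it to each row. -/
def permTabloid (π : Equiv.Perm (Fin n)) (R : Tabloid n μ) : Tabloid n μ :=
  ⟨fun r => (R.1 r).image π, by
    obtain ⟨h1, h2, h3⟩ := R.2
    refine ⟨fun r => ?_, fun r s hrs => ?_, fun i => ?_⟩
    · rw [Finset.card_image_of_injective _ π.injective, h1 r]
    · exact (Finset.disjoint_image π.injective).mpr (h2 r s hrs)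
    · obtain ⟨r, hr⟩ := h3 (π⁻¹ i)
      exact ⟨r, Finset.mem_image.mpr ⟨π⁻¹ i, hr, by simp⟩⟩⟩

/-- The action of a permutation on a tableau (postcomposition). -/
def permTableau (π : Equiv.Perm (Fin n)) (t : YoungTableau n μ) : YoungTableau n μ :=
  t.trans π

/-- The tabloid `{t}` determined by a tableau `t`: its `r`-th row is the set of entries
in the `r`-th row of `t`. -/
def tabloidOf (t : YoungTableau n μ) : Tabloid n μ :=
  ⟨fun r => Finset.univ.image fun c : Fin (μ.get r) => t ⟨r, c⟩, by
    refine ⟨fun r => ?_, fun r s hrs => ?_, fun i => ?_⟩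
    · rw [Finset.card_image_of_injective, Finset.card_univ, Fintype.card_fin]
      intro c₁ c₂ h
      have := t.injective h
      exact (Sigma.mk.inj_iff.mp this).2.eq
    · rw [Finset.disjoint_left]
      rintro a ha hb
      obtain ⟨c₁, -, h₁⟩ := Finset.mem_image.mp ha
      obtain ⟨c₂, -, h₂⟩ := Finset.mem_image.mp hb
      have := t.injective (h₁.trans h₂.symm)
      exact hrs (Sigma.mk.inj_iff.mp this).1
    · refine ⟨(t.symm i).1,
        Finset.mem_image.mpr ⟨(t.symm i).2, Finset.mem_univ _, ?_⟩⟩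
      exact t.apply_symm_apply i⟩

/-- The (index of the) row of a tableau containing a given symbol. -/
def rowIdx (t : YoungTableau n μ) (i : Fin n) : ℕ :=
  ((t.symm i).1 : ℕ)

/-- The (index of the) column of a tableau containing a given symbol. -/
def colIdx (t : YoungTableau n μ) (i : Fin n) : ℕ :=
  ((t.symm i).2 : ℕ)

/-- The column stabilizer `C_t` of a tableau: the permutations preserving each column. -/
def colStab (t : YoungTableau n μ) : Finset (Equiv.Perm (Fin n)) :=
  Finset.univ.filter fun σ => ∀ i, colIdx t (σ i) = colIdx t i

/-- Membership in the row stabilizer `R_t` of a tableau. -/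
def memRowStab (t : YoungTableau n μ) (π : Equiv.Perm (Fin n)) : Prop :=
  ∀ i, rowIdx t (π i) = rowIdx t i

/-- The polytabloid `e_t = Σ_{σ ∈ C_t} sgn(σ)·{σt}` of a tableau `t`, an element of the
free `ℤ`-module `M^μ` on the `μ`-tabloids. -/
def polytabloid (t : YoungTableau n μ) : Tabloid n μ →₀ ℤ :=
  ∑ σ ∈ colStab t, ((Equiv.Perm.sign σ : ℤˣ) : ℤ) • Finsupp.single (tabloidOf (permTableau σ t)) 1

/-- The symmetric bilinear form on `M^μ` making the tabloids orthonormal. -/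
def tabForm (x y : Tabloid n μ →₀ ℤ) : ℤ :=
  x.sum fun T a => a * y T

/-- The action of a permutation on `M^μ`, permuting the tabloid basis. -/
def permMap (π : Equiv.Perm (Fin n)) (x : Tabloid n μ →₀ ℤ) : Tabloid n μ →₀ ℤ :=
  Finsupp.mapDomain (permTabloid π) x

/-- `supp(t)`: the set of tabloids `{σt}` for `σ ∈ C_t`. -/
def tabSupp (t : YoungTableau n μ) : Finset (Tabloid n μ) :=
  (colStab t).image fun σ => tabloidOf (permTableau σ t)

/-! ### Auxiliary lemmas -/

lemma even_card_of_fpf_involution {α : Type*} (s : Finset α) (g : α → α)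
    (hmem : ∀ a ∈ s, g a ∈ s) (hinv : ∀ a ∈ s, g (g a) = a) (hne : ∀ a ∈ s, g a ≠ a) :
    Even s.card := by
  have h : ∑ _x ∈ s, (1 : ZMod 2) = 0 :=
    Finset.sum_involution (fun a _ => g a) (fun a _ => by decide)
      (fun a ha _ => hne a ha) hmem (fun a ha => hinv a ha)
  rw [Finset.sum_const, nsmul_eq_mul, mul_one, ZMod.natCast_eq_zero_iff] at h
  exact even_iff_two_dvd.mpr h

lemma tabloid_ext {R S : Tabloid n μ} (h : ∀ r, R.1 r = S.1 r) : R = S :=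
  Subtype.ext (funext h)

lemma permTabloid_mul (g h : Equiv.Perm (Fin n)) (R : Tabloid n μ) :
    permTabloid (g * h) R = permTabloid g (permTabloid h R) := by
  refine tabloid_ext fun r => ?_
  simp [permTabloid, Finset.image_image, Function.comp_def, Equiv.Perm.mul_apply]

lemma permTabloid_one (R : Tabloid n μ) : permTabloid (1 : Equiv.Perm (Fin n)) R = R := by
  refine tabloid_ext fun r => ?_
  simp [permTabloid]

lemma tabloidOf_permTableau (g : Equiv.Perm (Fin n)) (u : YoungTableau n μ) :
    tabloidOf (permTableau g u) = permTabloid g (tabloidOf u) := by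
  refine tabloid_ext fun r => ?_
  simp only [tabloidOf, permTableau, permTabloid, Finset.image_image]
  rfl

lemma colStab_mem_iff (t : YoungTableau n μ) (σ : Equiv.Perm (Fin n)) :
    σ ∈ colStab t ↔ ∀ i, colIdx t (σ i) = colIdx t i := by
  simp [colStab]

lemma tabForm_sum {ι : Type*} (s : Finset ι) (c : ι → ℤ) (U : ι → Tabloid n μ)
    (y : Tabloid n μ →₀ ℤ) :
    tabForm (∑ i ∈ s, c i • Finsupp.single (U i) (1 : ℤ)) y = ∑ i ∈ s, c i * y (U i) := by
  classical
  induction s using Finset.induction with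
  | empty => simp [tabForm]
  | insert _ _ hx ih =>
    rw [Finset.sum_insert hx, Finset.sum_insert hx, ← ih]
    show tabForm _ _ = _
    unfold tabForm
    rw [Finsupp.sum_add_index (by simp) (by intro T _ b₁ b₂; ring)]
    congr 1
    rw [Finsupp.smul_single', Finsupp.sum_single_index (by ring), mul_one]

lemma polytabloid_apply (t : YoungTableau n μ) (U : Tabloid n μ) :
    polytabloid t U = ∑ σ ∈ colStab t,
      ((Equiv.Perm.sign σ : ℤˣ) : ℤ) * (if tabloidOf (permTableau σ t) = U then 1 else 0) := by
  unfold polytabloid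
  rw [Finsupp.finset_sum_apply]
  refine Finset.sum_congr rfl fun σ _ => ?_
  rw [Finsupp.smul_apply, Finsupp.single_apply, smul_eq_mul]

lemma permMap_polytabloid (π : Equiv.Perm (Fin n)) (t : YoungTableau n μ) :
    permMap π (polytabloid t) = ∑ σ ∈ colStab t, ((Equiv.Perm.sign σ : ℤˣ) : ℤ) •
      Finsupp.single (permTabloid π (tabloidOf (permTableau σ t))) (1 : ℤ) := by
  unfold permMap polytabloid
  rw [Finsupp.mapDomain_finset_sum]
  refine Finset.sum_congr rfl fun σ _ => ?_
  rw [Finsupp.mapDomain_smul, Finsupp.mapDomain_single]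

lemma sign_cast_zmod (σ : Equiv.Perm (Fin n)) :
    (((Equiv.Perm.sign σ : ℤˣ) : ℤ) : ZMod 2) = 1 := by
  rcases Int.units_eq_one_or (Equiv.Perm.sign σ) with h | h <;> rw [h] <;> decide

lemma tabForm_cast_card (t : YoungTableau n μ) (π : Equiv.Perm (Fin n)) :
    ((tabForm (permMap π (polytabloid t)) (polytabloid t) : ℤ) : ZMod 2) =
      ((((colStab t) ×ˢ (colStab t)).filter fun p =>
        tabloidOf (permTableau p.2 t) =
          permTabloid π (tabloidOf (permTableau p.1 t))).card : ZMod 2) := by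
  rw [permMap_polytabloid, tabForm_sum]
  have : ∀ σ ∈ colStab t, ((Equiv.Perm.sign σ : ℤˣ) : ℤ) *
      polytabloid t (permTabloid π (tabloidOf (permTableau σ t))) =
      ∑ τ ∈ colStab t, ((Equiv.Perm.sign σ : ℤˣ) : ℤ) * (((Equiv.Perm.sign τ : ℤˣ) : ℤ) *
        (if tabloidOf (permTableau τ t) = permTabloid π (tabloidOf (permTableau σ t))
          then 1 else 0)) := by
    intro σ _
    rw [polytabloid_apply, Finset.mul_sum]
  rw [Finset.sum_congr rfl this]
  push_cast
  simp only [sign_cast_zmod, one_mul]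
  rw [← Finset.sum_product']
  rw [Finset.sum_boole]

lemma filter_odd_length_aux (l : List ℕ) :
    (l.map fun x => if Odd x then 1 else 0).sum = (l.filter fun i => Odd i).length := by
  induction l with
  | nil => simp
  | cons a tl ih => by_cases h : Odd a <;> simp [List.filter_cons, h, ih] <;> omega

/-- Let `μ` be a partition of `n` with distinct parts, `t` a `μ`-tableau and `π ∈ S_n` an
`m`-involution (`m ≥ 1`) with `⟨π·e_t, e_t⟩` odd.  Then `m ≤ (n − ℓ_o(μ))/2`, and `π`
fixes at most one entry in each column of `t`. -/
theorem of_odd_tabForm_upper_bound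
    (hpos : ∀ i ∈ μ, 0 < i) (hdist : μ.Chain' (· > ·)) (hsum : μ.sum = n)
    (t : YoungTableau n μ) (m : ℕ) (hm : 1 ≤ m) (π : Equiv.Perm (Fin n))
    (hπ : π.cycleType = Multiset.replicate m 2)
    (hodd : Odd (tabForm (permMap π (polytabloid t)) (polytabloid t))) :
    (m : ℚ) ≤ ((n : ℚ) - (μ.filter fun i => Odd i).length) / 2 ∧
    ∀ c : ℕ, ∀ i j : Fin n, colIdx t i = c → colIdx t j = c →
      π i = i → π j = j → i = j := by
  classical
  -- π is an involution
  have hππ : π * π = 1 := by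
    have h2 : orderOf π ∣ 2 := by
      rw [← Equiv.Perm.lcm_cycleType, hπ]
      exact Multiset.lcm_dvd.mpr fun b hb => by
        rw [Multiset.eq_of_mem_replicate hb]
    have := orderOf_dvd_iff_pow_eq_one.mp h2
    rwa [pow_two] at this
  have hππ' : ∀ k, π (π k) = k := fun k => by
    rw [← Equiv.Perm.mul_apply, hππ, Equiv.Perm.one_apply]
  have hπinvol : ∀ X : Tabloid n μ, permTabloid π (permTabloid π X) = X := fun X => by
    rw [← permTabloid_mul, hππ, permTabloid_one]
  set B : Finset (Equiv.Perm (Fin n) × Equiv.Perm (Fin n)) :=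
    ((colStab t) ×ˢ (colStab t)).filter (fun p =>
      tabloidOf (permTableau p.2 t) =
        permTabloid π (tabloidOf (permTableau p.1 t))) with hBdef
  have hmemB : ∀ p : Equiv.Perm (Fin n) × Equiv.Perm (Fin n), p ∈ B ↔
      p.1 ∈ colStab t ∧ p.2 ∈ colStab t ∧
        tabloidOf (permTableau p.2 t) =
          permTabloid π (tabloidOf (permTableau p.1 t)) := by
    intro p
    rw [hBdef, Finset.mem_filter, Finset.mem_product, and_assoc]
  -- oddness of the pair count
  have hBodd : Odd B.card := by
    have h1 : ((tabForm (permMap π (polytabloid t)) (polytabloid t) : ℤ) : ZMod 2) = 1 := by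
      obtain ⟨k, hk⟩ := hodd
      rw [hk]
      push_cast
      rw [show ((2 : ZMod 2)) = 0 by decide]
      ring
    rw [tabForm_cast_card] at h1
    have hnd : ¬ (2 ∣ B.card) := fun hd => by
      rw [(ZMod.natCast_eq_zero_iff _ 2).mpr hd] at h1
      exact (by decide : ((0 : ZMod 2) ≠ 1)) h1
    exact Nat.not_even_iff_odd.mp fun he => hnd (even_iff_two_dvd.mp he)
  constructor
  · -- part 1
    have hfix : ∃ σ ∈ colStab t, tabloidOf (permTableau σ t) =
        permTabloid π (tabloidOf (permTableau σ t)) := by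
      by_contra hno
      push_neg at hno
      have heven := even_card_of_fpf_involution B (fun p => (p.2, p.1))
        (by
          intro p hp
          rw [hmemB] at hp ⊢
          obtain ⟨h1, h2, h3⟩ := hp
          refine ⟨h2, h1, ?_⟩
          rw [h3, hπinvol])
        (by intro p _; rfl)
        (by
          intro p hp hne
          rw [hmemB] at hp
          obtain ⟨h1, h2, h3⟩ := hp
          have h12 : p.2 = p.1 := congrArg Prod.fst hne
          rw [h12] at h3
          exact hno p.1 h1 h3)
      exact (Nat.not_even_iff_odd.mpr hBodd) heven
    obtain ⟨σ, hσC, hσ⟩ := hfix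
    set R := tabloidOf (permTableau σ t) with hRdef
    have hrow : ∀ r, (R.1 r).image π = R.1 r := by
      intro r
      have := congrArg (fun X : Tabloid n μ => X.1 r) hσ
      exact this.symm
    obtain ⟨hcard, hdisj, hcover⟩ := R.2
    have hsupp : π.support.card = 2 * m := by
      rw [← Equiv.Perm.sum_cycleType, hπ, Multiset.sum_replicate, smul_eq_mul]
      ring
    set c : Fin μ.length → ℕ := fun r => ((R.1 r) ∩ π.support).card with hcdef
    have hceven : ∀ r, Even (c r) := by
      intro r
      refine even_card_of_fpf_involution _ π ?_ ?_ ?_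
      · intro a ha
        rw [Finset.mem_inter] at ha ⊢
        exact ⟨(hrow r) ▸ Finset.mem_image_of_mem π ha.1,
          Equiv.Perm.apply_mem_support.mpr ha.2⟩
      · intro a _
        exact hππ' a
      · intro a ha
        exact Equiv.Perm.mem_support.mp (Finset.mem_inter.mp ha).2
    have hsum_c : ∑ r, c r = 2 * m := by
      rw [← hsupp]
      rw [← Finset.card_biUnion (fun r _ q _ hrq =>
        Finset.disjoint_left.mpr fun a ha ha' =>
          Finset.disjoint_left.mp (hdisj r q hrq)
            (Finset.mem_inter.mp ha).1 (Finset.mem_inter.mp ha').1)]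
      congr 1
      ext a
      simp only [Finset.mem_biUnion, Finset.mem_univ, true_and, Finset.mem_inter]
      constructor
      · rintro ⟨r, _, ha⟩; exact ha
      · intro ha
        obtain ⟨r, hr⟩ := hcover a
        exact ⟨r, hr, ha⟩
    have hcle : ∀ r, c r ≤ μ.get r := fun r =>
      le_of_le_of_eq (Finset.card_le_card Finset.inter_subset_left) (hcard r)
    have key : ∀ r, c r + (if Odd (μ.get r) then 1 else 0) ≤ μ.get r := by
      intro r
      split
      · next h =>
        have he := Nat.even_iff.mp (hceven r)
        have ho := Nat.odd_iff.mp h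
        have := hcle r
        omega
      · simpa using hcle r
    have hl : ((μ.filter fun i => Odd i).length : ℕ) =
        ∑ r : Fin μ.length, (if Odd (μ.get r) then 1 else 0) := by
      rw [← filter_odd_length_aux μ]
      rw [← Fin.sum_univ_fun_getElem μ (fun x => if Odd x then 1 else 0)]
      simp [List.get_eq_getElem]
    have hn : ∑ r : Fin μ.length, μ.get r = n := by
      rw [← hsum, ← Fin.sum_univ_getElem μ]
      simp [List.get_eq_getElem]
    have hineq : 2 * m + (μ.filter fun i => Odd i).length ≤ n := by
      calc 2 * m + (μ.filter fun i => Odd i).length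
          = ∑ r, c r + ∑ r : Fin μ.length, (if Odd (μ.get r) then 1 else 0) := by
            rw [hsum_c, hl]
        _ = ∑ r : Fin μ.length, (c r + (if Odd (μ.get r) then 1 else 0)) := by
            rw [Finset.sum_add_distrib]
        _ ≤ ∑ r : Fin μ.length, μ.get r := Finset.sum_le_sum fun r _ => key r
        _ = n := hn
    rw [le_div_iff₀ (by norm_num : (0:ℚ) < 2)]
    have h' : ((2 * m + (μ.filter fun i => Odd i).length : ℕ) : ℚ) ≤ (n : ℚ) := by
      exact_mod_cast hineq
    push_cast at h'
    linarith
  · -- part 2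
    intro c₀ i j hci hcj hpi hpj
    by_contra hij
    set s := Equiv.swap i j with hsdef
    have hsCol : ∀ k, colIdx t (s k) = colIdx t k := by
      intro k
      rcases eq_or_ne k i with rfl | hik
      · rw [hsdef, Equiv.swap_apply_left, hci, hcj]
      rcases eq_or_ne k j with rfl | hjk
      · rw [hsdef, Equiv.swap_apply_right, hci, hcj]
      · rw [hsdef, Equiv.swap_apply_of_ne_of_ne hik hjk]
    have hπs : π * s = s * π := by
      ext k
      simp only [Equiv.Perm.mul_apply]
      rcases eq_or_ne k i with rfl | hik
      · rw [hsdef, Equiv.swap_apply_left, hpj, hpi, Equiv.swap_apply_left]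
      rcases eq_or_ne k j with rfl | hjk
      · rw [hsdef, Equiv.swap_apply_right, hpi, hpj, Equiv.swap_apply_right]
      · have hπki : π k ≠ i := fun h => hik (by
          have : π (π k) = π i := congrArg π h
          rwa [hππ', hpi] at this)
        have hπkj : π k ≠ j := fun h => hjk (by
          have : π (π k) = π j := congrArg π h
          rwa [hππ', hpj] at this)
        rw [hsdef, Equiv.swap_apply_of_ne_of_ne hik hjk,
          Equiv.swap_apply_of_ne_of_ne hπki hπkj]
    have hsC : ∀ σ ∈ colStab t, s * σ ∈ colStab t := by
      intro σ hσ
      rw [colStab_mem_iff] at hσ ⊢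
      intro k
      rw [Equiv.Perm.mul_apply, hsCol, hσ k]
    have hTmul : ∀ (g σ : Equiv.Perm (Fin n)),
        tabloidOf (permTableau (g * σ) t) =
          permTabloid g (tabloidOf (permTableau σ t)) := by
      intro g σ
      rw [← tabloidOf_permTableau]
      congr 1
    have heven := even_card_of_fpf_involution B (fun p => (s * p.1, s * p.2))
      (by
        intro p hp
        rw [hmemB] at hp ⊢
        obtain ⟨h1, h2, h3⟩ := hp
        refine ⟨hsC _ h1, hsC _ h2, ?_⟩
        show tabloidOf (permTableau (s * p.2) t) =
          permTabloid π (tabloidOf (permTableau (s * p.1) t))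
        rw [hTmul, hTmul, h3, ← permTabloid_mul, ← hπs, permTabloid_mul])
      (by
        intro p _
        show (s * (s * p.1), s * (s * p.2)) = p
        rw [← mul_assoc, ← mul_assoc, hsdef, Equiv.swap_mul_self, one_mul, one_mul])
      (by
        intro p _ hne
        have h1 : s * p.1 = p.1 := congrArg Prod.fst hne
        have hs1 : s = 1 := by
          have h1' : s * p.1 = 1 * p.1 := by rw [h1, one_mul]
          exact mul_right_cancel h1'
        have : j = i := by
          have := congrFun (congrArg (fun e : Equiv.Perm (Fin n) => (e : Fin n → Fin n)) hs1) i
          simpa [hsdef, Equiv.swap_apply_left] using this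
        exact hij this.symm)
    exact (Nat.not_even_iff_odd.mpr hBodd) heven

end
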